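/- Let K be a field and f : K → ℝ≥0 a function satisfying: f(x) = 0 if and only if x = 0; f(xy) = f(x)·f(y) for all x, y; and there exists A > 0 such that f(x + y) ≤ A · max(f(x), f(y)) for all x, y. If moreover there exists C > 0 such that f(n · 1_K) ≤ C·n for every integer n > 0, then f satisfies the triangle inequality f(x + y) ≤ f(x) + f(y) for all x, y ∈ K, i.e. f is an absolute value on K. -/

import Mathlib

open NNReal Filter Finset

/-- If `f : K → ℝ≥0` is multiplicative, vanishes exactly at `0`, satisfies
`f (x + y) ≤ A * max (f x) (f y)` for some `A > 0`, and satisfies `f (n • 1) ≤ C * n`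
for some `C > 0` and all integers `n > 0`, then `f` satisfies the triangle
inequality, i.e. `f` is an absolute value on `K`. -/
theorem absoluteValue_of_bounded_on_nat {K : Type*} [Field K] (f : K → ℝ≥0)
    (h0 : ∀ x, f x = 0 ↔ x = 0)
    (hmul : ∀ x y, f (x * y) = f x * f y)
    (hA : ∃ A : ℝ≥0, 0 < A ∧ ∀ x y, f (x + y) ≤ A * max (f x) (f y))
    (hC : ∃ C : ℝ≥0, 0 < C ∧ ∀ n : ℕ, 0 < n → f ((n : K)) ≤ C * n) :
    ∀ x y, f (x + y) ≤ f x + f y := by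
  obtain ⟨A, hApos, hAbd⟩ := hA
  obtain ⟨C, hCpos, hCbd⟩ := hC
  have hf0 : f 0 = 0 := (h0 0).mpr rfl
  have hf1 : f 1 = 1 := by
    have h := hmul 1 1
    rw [one_mul] at h
    have h1 : f 1 ≠ 0 := fun h' => one_ne_zero ((h0 1).mp h')
    have : f 1 * 1 = f 1 * f 1 := by rw [mul_one]; exact h
    exact (mul_left_cancel₀ h1 this).symm
  have hpow : ∀ a : K, ∀ j : ℕ, f (a ^ j) = f a ^ j := by
    intro a j
    induction j with
    | zero => simpa using hf1
    | succ j ih => rw [pow_succ, hmul, ih, pow_succ]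
  set B : ℝ≥0 := max A 1 with hBdef
  have hB1 : (1 : ℝ≥0) ≤ B := le_max_right _ _
  have hBbd : ∀ x y, f (x + y) ≤ B * max (f x) (f y) := fun x y =>
    (hAbd x y).trans (mul_le_mul_left (le_max_left _ _) _)
  -- general sum estimate
  have hsum : ∀ k : ℕ, ∀ n : ℕ, ∀ g : ℕ → K, n ≤ 2 ^ k →
      f (∑ i ∈ range n, g i) ≤ B ^ k * ∑ i ∈ range n, f (g i) := by
    intro k
    induction k with
    | zero =>
      intro n g hn
      interval_cases n
      · simpa using hf0.le
      · simp
    | succ k ih =>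
      intro n g hn
      by_cases hn' : n ≤ 2 ^ k
      · refine (ih n g hn').trans ?_
        gcongr
        · exact Nat.le_succ k
      · push_neg at hn'
        obtain ⟨r, hr⟩ : ∃ r, n = 2 ^ k + r := ⟨n - 2 ^ k, by omega⟩
        have h2k : 2 ^ (k + 1) = 2 ^ k + 2 ^ k := by ring
        have hrle : r ≤ 2 ^ k := by omega
        subst hr
        rw [Finset.sum_range_add]
        calc f (∑ i ∈ range (2 ^ k), g i + ∑ i ∈ range r, g (2 ^ k + i))
            ≤ B * max (f (∑ i ∈ range (2 ^ k), g i)) (f (∑ i ∈ range r, g (2 ^ k + i))) :=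
              hBbd _ _
          _ ≤ B * max (B ^ k * ∑ i ∈ range (2 ^ k), f (g i))
                (B ^ k * ∑ i ∈ range r, f (g (2 ^ k + i))) := by
              gcongr
              · exact ih _ _ le_rfl
              · exact ih _ _ hrle
          _ ≤ B * (B ^ k * ∑ i ∈ range (2 ^ k), f (g i)
                + B ^ k * ∑ i ∈ range r, f (g (2 ^ k + i))) := by
              gcongr
              exact max_le_add_of_nonneg zero_le zero_le
          _ = B ^ (k + 1) * (∑ i ∈ range (2 ^ k), f (g i)
                + ∑ i ∈ range r, f (g (2 ^ k + i))) := by ring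
          _ = B ^ (k + 1) * ∑ i ∈ range (2 ^ k + r), f (g i) := by
              rw [Finset.sum_range_add]
  intro x y
  -- key binomial estimate
  have key : ∀ m : ℕ, f (x + y) ^ (2 ^ m) ≤ B ^ (m + 1) * C * (f x + f y) ^ (2 ^ m) := by
    intro m
    set n := 2 ^ m with hn
    have hle : n + 1 ≤ 2 ^ (m + 1) := by
      have : 0 < n := Nat.pow_pos (by norm_num)
      rw [pow_succ]
      omega
    calc f (x + y) ^ n = f ((x + y) ^ n) := (hpow _ _).symm
      _ = f (∑ i ∈ range (n + 1), x ^ i * y ^ (n - i) * (n.choose i : K)) := by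
          rw [add_pow]
      _ ≤ B ^ (m + 1) * ∑ i ∈ range (n + 1), f (x ^ i * y ^ (n - i) * (n.choose i : K)) :=
          hsum (m + 1) (n + 1) _ hle
      _ ≤ B ^ (m + 1) * ∑ i ∈ range (n + 1),
            f x ^ i * f y ^ (n - i) * (C * (n.choose i : ℝ≥0)) := by
          gcongr with i hi
          rw [hmul, hmul, hpow, hpow]
          gcongr
          exact hCbd _ (Nat.choose_pos (Nat.lt_succ_iff.mp (mem_range.mp hi)))
      _ = B ^ (m + 1) * C * ∑ i ∈ range (n + 1),
            f x ^ i * f y ^ (n - i) * (n.choose i : ℝ≥0) := by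
          rw [mul_assoc]
          congr 1
          rw [Finset.mul_sum]
          exact Finset.sum_congr rfl fun i _ => by ring
      _ = B ^ (m + 1) * C * (f x + f y) ^ n := by rw [add_pow]
  -- pass to the limit
  rcases eq_or_ne (f x + f y) 0 with hb0 | hb0
  · have hx : f x = 0 := le_antisymm (hb0 ▸ le_self_add) zero_le
    have hy : f y = 0 := le_antisymm (hb0 ▸ le_add_self) zero_le
    rw [(h0 x).mp hx, (h0 y).mp hy]
    simp [hf0]
  · rw [← NNReal.coe_le_coe]
    set a : ℝ := (f (x + y) : ℝ)
    set b : ℝ := ((f x + f y : ℝ≥0) : ℝ)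
    have ha0 : 0 ≤ a := (f (x + y)).coe_nonneg
    have hb0' : 0 ≤ b := (f x + f y).coe_nonneg
    have hBR : (1 : ℝ) ≤ (B : ℝ) := by exact_mod_cast hB1
    have hCR : (0 : ℝ) < (C : ℝ) := by exact_mod_cast hCpos
    have hD : ∀ m : ℕ, (0 : ℝ) < (B : ℝ) ^ (m + 1) * (C : ℝ) := fun m => by positivity
    have keyR : ∀ m : ℕ, a ^ (2 ^ m) ≤ ((B : ℝ) ^ (m + 1) * (C : ℝ)) * b ^ (2 ^ m) := by
      intro m
      have := key m
      rw [← NNReal.coe_le_coe] at this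
      push_cast at this
      exact this
    -- a ≤ D_m ^ ((2^m)⁻¹) * b for each m
    have step : ∀ m : ℕ, a ≤ ((B : ℝ) ^ (m + 1) * (C : ℝ)) ^ (((2 : ℝ) ^ m)⁻¹) * b := by
      intro m
      have hN : (((2 : ℕ) ^ m : ℕ) : ℝ) = (2 : ℝ) ^ m := by push_cast; ring
      have hne : (2 : ℕ) ^ m ≠ 0 := pow_ne_zero m two_ne_zero
      have h1 : (a ^ (2 ^ m) : ℝ) ^ ((((2 : ℕ) ^ m : ℕ) : ℝ))⁻¹ ≤
          (((B : ℝ) ^ (m + 1) * (C : ℝ)) * b ^ (2 ^ m)) ^ ((((2 : ℕ) ^ m : ℕ) : ℝ))⁻¹ := by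
        apply Real.rpow_le_rpow (by positivity) (keyR m) (by positivity)
      rw [Real.mul_rpow (hD m).le (by positivity)] at h1
      rw [Real.pow_rpow_inv_natCast ha0 hne, Real.pow_rpow_inv_natCast hb0' hne, hN] at h1
      exact h1
    -- limit of the right-hand side
    have hhalf : Tendsto (fun m : ℕ => ((2 : ℝ) ^ m)⁻¹) atTop (nhds 0) := by
      simpa [inv_pow] using
        tendsto_pow_atTop_nhds_zero_of_lt_one (by norm_num : (0:ℝ) ≤ 2⁻¹) (by norm_num)
    have hmhalf : Tendsto (fun m : ℕ => (m : ℝ) * ((2 : ℝ) ^ m)⁻¹) atTop (nhds 0) := by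
      simpa [inv_pow] using
        tendsto_self_mul_const_pow_of_lt_one (by norm_num : (0:ℝ) ≤ 2⁻¹) (by norm_num)
    have hexp : Tendsto
        (fun m : ℕ => (((2 : ℝ) ^ m)⁻¹) * Real.log ((B : ℝ) ^ (m + 1) * (C : ℝ)))
        atTop (nhds 0) := by
      have heq : ∀ m : ℕ, (((2 : ℝ) ^ m)⁻¹) * Real.log ((B : ℝ) ^ (m + 1) * (C : ℝ)) =
          ((m : ℝ) * ((2 : ℝ) ^ m)⁻¹ + ((2 : ℝ) ^ m)⁻¹) * Real.log (B : ℝ)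
            + ((2 : ℝ) ^ m)⁻¹ * Real.log (C : ℝ) := by
        intro m
        rw [Real.log_mul (by positivity) hCR.ne', Real.log_pow]
        push_cast
        ring
      simp only [heq]
      have := (((hmhalf.add hhalf).mul_const (Real.log (B : ℝ))).add
        (hhalf.mul_const (Real.log (C : ℝ))))
      simpa using this
    have hlim : Tendsto
        (fun m : ℕ => ((B : ℝ) ^ (m + 1) * (C : ℝ)) ^ (((2 : ℝ) ^ m)⁻¹) * b)
        atTop (nhds b) := by
      have h1 : Tendsto
          (fun m : ℕ => ((B : ℝ) ^ (m + 1) * (C : ℝ)) ^ (((2 : ℝ) ^ m)⁻¹))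
          atTop (nhds 1) := by
        have heq : ∀ m : ℕ, ((B : ℝ) ^ (m + 1) * (C : ℝ)) ^ (((2 : ℝ) ^ m)⁻¹) =
            Real.exp ((((2 : ℝ) ^ m)⁻¹) * Real.log ((B : ℝ) ^ (m + 1) * (C : ℝ))) := by
          intro m
          rw [Real.rpow_def_of_pos (hD m), mul_comm]
        simp only [heq]
        have := (Real.continuous_exp.tendsto 0).comp hexp
        simpa [Function.comp_def] using this
      simpa using h1.mul_const b
    exact ge_of_tendsto' hlim step
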